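/- Let $t \ge 1$ and let $\{(A_i, B_i) : i \in I\}$ be a finite collection of pairs of finite sets such that: (a) $|A_i \cap B_i| \le t$ for each $i$; (b) $|A_i \cap B_j| \ge t$ for all $i \ne j$; (c') for $i \ne j$ with $A_i \cap B_i = A_j \cap B_j$, it is not the case that $A_i \cap B_j = A_i \cap B_i = A_j \cap B_i$. Then $\sum_{i \in I} \binom{|A_i \cup B_i|}{|A_i \setminus B_i|}^{-1} \binom{|B_i|}{|A_i \cap B_i|}^{-1} \le 1$. -/

import Mathlib

/-- The set of equivalences compatible with colorings is equivalent to families of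
fiber equivalences. -/
def colorEquiv {β γ K : Type*} (c1 : β → K) (c2 : γ → K) :
    {g : β ≃ γ // ∀ x, c2 (g x) = c1 x} ≃ ∀ k, ({x // c1 x = k} ≃ {y // c2 y = k}) where
  toFun g k :=
    { toFun := fun x => ⟨g.1 x.1, by rw [g.2]; exact x.2⟩
      invFun := fun y => ⟨g.1.symm y.1, by
        have := g.2 (g.1.symm y.1); rw [Equiv.apply_symm_apply] at this; rw [← this]; exact y.2⟩
      left_inv := fun x => by simp
      right_inv := fun y => by simp }
  invFun e := ⟨Equiv.ofFiberEquiv e, fun x => Equiv.ofFiberEquiv_map e x⟩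
  left_inv g := by
    apply Subtype.ext
    apply Equiv.ext
    intro x
    simp [Equiv.ofFiberEquiv]
  right_inv e := by
    funext k
    apply Equiv.ext
    intro x
    apply Subtype.ext
    obtain ⟨x, hx⟩ := x
    subst hx
    rfl

theorem card_colorEquiv {β γ K : Type*} [Fintype β] [Fintype γ] [Fintype K]
    [DecidableEq β] [DecidableEq γ] [DecidableEq K]
    (c1 : β → K) (c2 : γ → K)
    (h : ∀ k, Fintype.card {x // c1 x = k} = Fintype.card {y // c2 y = k}) :
    Fintype.card {g : β ≃ γ // ∀ x, c2 (g x) = c1 x}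
      = ∏ k, Nat.factorial (Fintype.card {x // c1 x = k}) := by
  rw [Fintype.card_congr (colorEquiv c1 c2), Fintype.card_pi]
  exact Finset.prod_congr rfl fun k _ =>
    Fintype.card_equiv (Fintype.equivOfCardEq (h k))


open Finset
open scoped Nat

lemma card_fin_lt (m j : ℕ) (hj : j ≤ m) :
    ((univ : Finset (Fin m)).filter (fun (i : Fin m) => (i : ℕ) < j)).card = j := by
  have : (univ : Finset (Fin m)).filter (fun (i : Fin m) => (i : ℕ) < j)
      = (univ : Finset (Fin j)).map (Fin.castLEEmb hj) := by
    ext k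
    simp only [mem_filter, mem_univ, true_and, mem_map, Fin.castLEEmb_apply]
    constructor
    · intro h; exact ⟨⟨k, h⟩, by ext; simp⟩
    · rintro ⟨i, rfl⟩; simpa using i.2
  rw [this, card_map, card_univ, Fintype.card_fin]

/-- rank of `k` within `M`. -/
def rankIn {n : ℕ} (M : Finset (Fin n)) (k : Fin n) : ℕ := (M.filter (· < k)).card

lemma rankIn_mono {n : ℕ} (M : Finset (Fin n)) {k k' : Fin n} (h : k ≤ k') :
    rankIn M k ≤ rankIn M k' := by
  apply card_le_card
  intro x hx
  simp only [mem_filter] at hx ⊢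
  exact ⟨hx.1, lt_of_lt_of_le hx.2 h⟩

lemma lt_of_rankIn_lt {n : ℕ} (M : Finset (Fin n)) {k k' : Fin n}
    (h : rankIn M k < rankIn M k') : k < k' := by
  by_contra hk
  exact absurd (rankIn_mono M (le_of_not_gt hk)) (by omega)

lemma rankIn_orderIso {n m : ℕ} (M : Finset (Fin n)) (hM : M.card = m) (i : Fin m) :
    rankIn M (M.orderIsoOfFin hM i) = i := by
  have himg : M.filter (· < (M.orderIsoOfFin hM i : Fin n))
      = (univ.filter (fun i' : Fin m => i' < i)).image
          (fun i' => (M.orderIsoOfFin hM i' : Fin n)) := by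
    ext k
    simp only [mem_filter, mem_image, mem_univ, true_and]
    constructor
    · rintro ⟨hkM, hk⟩
      refine ⟨(M.orderIsoOfFin hM).symm ⟨k, hkM⟩, ?_, by simp⟩
      rw [← OrderIso.lt_iff_lt (M.orderIsoOfFin hM)]
      rw [OrderIso.apply_symm_apply]; exact Subtype.coe_lt_coe.1 hk
    · rintro ⟨i', hi', rfl⟩
      exact ⟨(M.orderIsoOfFin hM i').2, by
        rw [Subtype.coe_lt_coe]; exact (M.orderIsoOfFin hM).lt_iff_lt.2 hi'⟩
  rw [rankIn, himg, card_image_of_injective _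
    (fun a b hab => (M.orderIsoOfFin hM).injective (Subtype.coe_injective hab))]
  have := card_fin_lt m i (le_of_lt i.2)
  simpa using this

lemma card_rankIn_filter {n m : ℕ} (M : Finset (Fin n)) (hM : M.card = m) {j : ℕ}
    (hj : j ≤ m) : (M.filter (fun k => rankIn M k < j)).card = j := by
  have himg : M.filter (fun k => rankIn M k < j)
      = (univ.filter (fun i : Fin m => (i : ℕ) < j)).image
          (fun i => (M.orderIsoOfFin hM i : Fin n)) := by
    ext k
    simp only [mem_filter, mem_image, mem_univ, true_and]
    constructor
    · rintro ⟨hkM, hk⟩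
      refine ⟨(M.orderIsoOfFin hM).symm ⟨k, hkM⟩, ?_, by simp⟩
      have : rankIn M (M.orderIsoOfFin hM ((M.orderIsoOfFin hM).symm ⟨k, hkM⟩)) < j := by
        simpa using hk
      rwa [rankIn_orderIso] at this
    · rintro ⟨i, hi, rfl⟩
      exact ⟨(M.orderIsoOfFin hM i).2, by rwa [rankIn_orderIso]⟩
  rw [himg, card_image_of_injective _
    (fun a b hab => (M.orderIsoOfFin hM).injective (Subtype.coe_injective hab)),
    card_fin_lt m j hj]

/-- color of a position in `Fin n` relative to `M` with thresholds `s`, `s+t`. -/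
def chi {n : ℕ} (s t : ℕ) (M : Finset (Fin n)) (k : Fin n) : Fin 4 :=
  if k ∈ M then (if rankIn M k < s then 0 else if rankIn M k < s + t then 1 else 2) else 3

/-- color of an element of `β` relative to blocks `S`, `T`, `U`. -/
def colOf {β : Type*} [DecidableEq β] (S T U : Finset β) (x : β) : Fin 4 :=
  if x ∈ S then 0 else if x ∈ T then 1 else if x ∈ U then 2 else 3

lemma chi_eq_zero_iff {n s t : ℕ} (M : Finset (Fin n)) (k : Fin n) :
    chi s t M k = 0 ↔ k ∈ M ∧ rankIn M k < s := by
  unfold chi; split_ifs with h1 h2 h3 <;> simp_all <;> omega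

lemma chi_eq_one_iff {n s t : ℕ} (M : Finset (Fin n)) (k : Fin n) :
    chi s t M k = 1 ↔ k ∈ M ∧ s ≤ rankIn M k ∧ rankIn M k < s + t := by
  unfold chi; split_ifs with h1 h2 h3 <;> simp_all <;> omega

lemma chi_eq_two_iff {n s t : ℕ} (M : Finset (Fin n)) (k : Fin n) :
    chi s t M k = 2 ↔ k ∈ M ∧ s + t ≤ rankIn M k := by
  unfold chi; split_ifs with h1 h2 h3 <;> simp_all <;> omega

lemma chi_eq_three_iff {n s t : ℕ} (M : Finset (Fin n)) (k : Fin n) :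
    chi s t M k = 3 ↔ k ∉ M := by
  unfold chi; split_ifs with h1 h2 h3 <;> simp_all

lemma colOf_eq_zero_iff {β : Type*} [DecidableEq β] (S T U : Finset β) (x : β) :
    colOf S T U x = 0 ↔ x ∈ S := by
  unfold colOf; split_ifs <;> simp_all

lemma colOf_eq_one_iff {β : Type*} [DecidableEq β] {S T U : Finset β}
    (hST : Disjoint S T) (x : β) : colOf S T U x = 1 ↔ x ∈ T := by
  unfold colOf; split_ifs with h1 h2 h3 <;> simp_all
  exact fun hT => disjoint_left.1 hST h1 hT

lemma colOf_eq_two_iff {β : Type*} [DecidableEq β] {S T U : Finset β}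
    (hSU : Disjoint S U) (hTU : Disjoint T U) (x : β) :
    colOf S T U x = 2 ↔ x ∈ U := by
  unfold colOf; split_ifs with h1 h2 h3 <;> simp_all
  · exact fun hU => disjoint_left.1 hSU h1 hU
  · exact fun hU => disjoint_left.1 hTU h2 hU

lemma colOf_eq_three_iff {β : Type*} [DecidableEq β] (S T U : Finset β) (x : β) :
    colOf S T U x = 3 ↔ x ∉ S ∧ x ∉ T ∧ x ∉ U := by
  unfold colOf; split_ifs <;> simp_all

section CountM

lemma card_union3 {β : Type*} [DecidableEq β] (S T U : Finset β)
    (hST : Disjoint S T) (hSU : Disjoint S U) (hTU : Disjoint T U) :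
    (S ∪ T ∪ U).card = S.card + T.card + U.card := by
  rw [card_union_of_disjoint (disjoint_union_left.2 ⟨hSU, hTU⟩),
    card_union_of_disjoint hST]

variable {β : Type*} [Fintype β] [DecidableEq β] (S T U : Finset β)

lemma card_fixed_color (hST : Disjoint S T) (hSU : Disjoint S U) (hTU : Disjoint T U)
    (M : Finset (Fin (Fintype.card β))) (hM : M.card = S.card + T.card + U.card) :
    Fintype.card {g : β ≃ Fin (Fintype.card β) //
        ∀ x, chi S.card T.card M (g x) = colOf S T U x}
      = S.card ! * T.card ! * U.card ! *
        (Fintype.card β - (S.card + T.card + U.card))! := by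
  set s := S.card with hs
  set t := T.card with hts
  set u := U.card with hu
  have hfib0 : Fintype.card {x // colOf S T U x = 0} = s := by
    rw [Fintype.card_subtype]
    congr 1
    ext x
    simp [colOf_eq_zero_iff]
  have hfib1 : Fintype.card {x // colOf S T U x = 1} = t := by
    rw [Fintype.card_subtype]
    congr 1
    ext x
    simp [colOf_eq_one_iff hST]
  have hfib2 : Fintype.card {x // colOf S T U x = 2} = u := by
    rw [Fintype.card_subtype]
    congr 1
    ext x
    simp [colOf_eq_two_iff hSU hTU]
  have hfib3 : Fintype.card {x // colOf S T U x = 3} = Fintype.card β - (s + t + u) := by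
    rw [Fintype.card_subtype]
    have : univ.filter (fun x => colOf S T U x = 3) = (S ∪ T ∪ U)ᶜ := by
      ext x
      simp [colOf_eq_three_iff, mem_union, not_or]
    rw [this, card_compl, card_union3 S T U hST hSU hTU]
  -- Fin side fibers
  have hsplit : ∀ j j' : ℕ, j ≤ j' → j' ≤ s + t + u →
      (M.filter (fun k => j ≤ rankIn M k ∧ rankIn M k < j')).card = j' - j := by
    intro j j' hjj' hj'
    have h1 : (M.filter (fun k => rankIn M k < j')).card = j' :=
      card_rankIn_filter M hM hj'
    have h2 : (M.filter (fun k => rankIn M k < j)).card = j :=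
      card_rankIn_filter M hM (le_trans hjj' hj')
    have h3 : (M.filter (fun k => rankIn M k < j')).filter (fun k => rankIn M k < j)
        = M.filter (fun k => rankIn M k < j) := by
      rw [filter_filter]
      congr 1
      ext k
      constructor
      · rintro ⟨h, h'⟩; exact h'
      · intro h; exact ⟨lt_of_lt_of_le h hjj', h⟩
    have h4 := card_filter_add_card_filter_not
      (s := M.filter (fun k => rankIn M k < j')) (p := fun k => rankIn M k < j)
    rw [h3, h1, h2] at h4
    have h5 : (M.filter (fun k => rankIn M k < j')).filter (fun k => ¬ rankIn M k < j)
        = M.filter (fun k => j ≤ rankIn M k ∧ rankIn M k < j') := by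
      rw [filter_filter]
      congr 1
      ext k
      omega
    rw [h5] at h4
    omega
  have hrank_lt : ∀ k ∈ M, rankIn M k < s + t + u := by
    intro k hk
    have hlt : rankIn M k < M.card := by
      apply card_lt_card
      constructor
      · exact filter_subset _ _
      · intro hsub
        have := hsub hk
        simp at this
    omega
  have hgib0 : Fintype.card {k // chi s t M k = 0} = s := by
    rw [Fintype.card_subtype]
    have : univ.filter (fun k => chi s t M k = 0) = M.filter (fun k => rankIn M k < s) := by
      ext k; simp [chi_eq_zero_iff, mem_filter]
    rw [this]
    exact card_rankIn_filter M hM (by omega)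
  have hgib1 : Fintype.card {k // chi s t M k = 1} = t := by
    rw [Fintype.card_subtype]
    have : univ.filter (fun k => chi s t M k = 1)
        = M.filter (fun k => s ≤ rankIn M k ∧ rankIn M k < s + t) := by
      ext k; simp [chi_eq_one_iff, mem_filter, and_assoc]
    rw [this]
    have := hsplit s (s + t) (by omega) (by omega)
    omega
  have hgib2 : Fintype.card {k // chi s t M k = 2} = u := by
    rw [Fintype.card_subtype]
    have : univ.filter (fun k => chi s t M k = 2)
        = M.filter (fun k => s + t ≤ rankIn M k ∧ rankIn M k < s + t + u) := by
      ext k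
      simp only [mem_filter, mem_univ, true_and, chi_eq_two_iff]
      constructor
      · rintro ⟨hk, h⟩; exact ⟨hk, h, hrank_lt k hk⟩
      · rintro ⟨hk, h, _⟩; exact ⟨hk, h⟩
    rw [this]
    have := hsplit (s + t) (s + t + u) (by omega) (by omega)
    omega
  have hgib3 : Fintype.card {k // chi s t M k = 3} = Fintype.card β - (s + t + u) := by
    rw [Fintype.card_subtype]
    have : univ.filter (fun k => chi s t M k = 3) = Mᶜ := by
      ext k; simp [chi_eq_three_iff]
    rw [this, card_compl, hM]
    simp
  have hcards : ∀ k : Fin 4, Fintype.card {x // colOf S T U x = k}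
      = Fintype.card {y // chi s t M y = k} := by
    intro k
    fin_cases k
    · exact hfib0.trans hgib0.symm
    · exact hfib1.trans hgib1.symm
    · exact hfib2.trans hgib2.symm
    · exact hfib3.trans hgib3.symm
  rw [card_colorEquiv (colOf S T U) (chi s t M) hcards]
  rw [Fin.prod_univ_four]
  rw [hfib0, hfib1, hfib2, hfib3]

end CountM

section Event

variable {β : Type*} [Fintype β] [DecidableEq β]

/-- The event that `S`, then `T`, then `U` appear in order under `g`. -/
def OrderEvent (S T U : Finset β) (g : β ≃ Fin (Fintype.card β)) : Prop :=
  (∀ x ∈ S, ∀ y ∈ T, g x < g y) ∧ (∀ x ∈ S, ∀ y ∈ U, g x < g y) ∧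
    (∀ x ∈ T, ∀ y ∈ U, g x < g y)

instance (S T U : Finset β) (g : β ≃ Fin (Fintype.card β)) :
    Decidable (OrderEvent S T U g) := by
  unfold OrderEvent; infer_instance

variable {S T U : Finset β}

lemma eventM (hST : Disjoint S T) (hSU : Disjoint S U) (hTU : Disjoint T U)
    {g : β ≃ Fin (Fintype.card β)} {M : Finset (Fin (Fintype.card β))}
    (hcol : ∀ x, chi S.card T.card M (g x) = colOf S T U x) :
    M = (S ∪ T ∪ U).image g ∧ OrderEvent S T U g := by
  constructor
  · ext k
    have h3 := (chi_eq_three_iff (s := S.card) (t := T.card) M k).symm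
    have hk := hcol (g.symm k)
    rw [Equiv.apply_symm_apply] at hk
    simp only [Finset.mem_image]
    constructor
    · intro hkM
      refine ⟨g.symm k, ?_, by simp⟩
      by_contra hV
      simp only [Finset.mem_union, not_or] at hV
      have : colOf S T U (g.symm k) = 3 :=
        (colOf_eq_three_iff S T U _).2 ⟨hV.1.1, hV.1.2, hV.2⟩
      rw [← hk] at this
      exact absurd ((chi_eq_three_iff M k).1 this) (by simpa using hkM)
    · rintro ⟨x, hx, rfl⟩
      by_contra hkM
      have : chi S.card T.card M (g x) = 3 := (chi_eq_three_iff M _).2 hkM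
      rw [hcol x] at this
      have := (colOf_eq_three_iff S T U x).1 this
      simp only [Finset.mem_union] at hx
      tauto
  · refine ⟨?_, ?_, ?_⟩
    · intro x hx y hy
      have h1 := (chi_eq_zero_iff M (g x)).1 (by rw [hcol x, colOf_eq_zero_iff]; exact hx)
      have h2 := (chi_eq_one_iff M (g y)).1 (by rw [hcol y, colOf_eq_one_iff hST]; exact hy)
      exact lt_of_rankIn_lt M (by omega)
    · intro x hx y hy
      have h1 := (chi_eq_zero_iff M (g x)).1 (by rw [hcol x, colOf_eq_zero_iff]; exact hx)
      have h2 := (chi_eq_two_iff M (g y)).1 (by rw [hcol y, colOf_eq_two_iff hSU hTU]; exact hy)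
      exact lt_of_rankIn_lt M (by omega)
    · intro x hx y hy
      have h1 := (chi_eq_one_iff M (g x)).1 (by rw [hcol x, colOf_eq_one_iff hST]; exact hx)
      have h2 := (chi_eq_two_iff M (g y)).1 (by rw [hcol y, colOf_eq_two_iff hSU hTU]; exact hy)
      exact lt_of_rankIn_lt M (by omega)

lemma eventM' (hST : Disjoint S T) (hSU : Disjoint S U) (hTU : Disjoint T U)
    {g : β ≃ Fin (Fintype.card β)} (hev : OrderEvent S T U g) :
    ∀ x, chi S.card T.card ((S ∪ T ∪ U).image g) (g x) = colOf S T U x := by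
  intro x
  set V := S ∪ T ∪ U with hV
  set M := V.image g with hM
  have hmem : ∀ y : β, g y ∈ M ↔ y ∈ V := by
    intro y
    simp only [hM, Finset.mem_image]
    constructor
    · rintro ⟨z, hz, hzy⟩; rwa [← g.injective hzy]
    · intro hy; exact ⟨y, hy, rfl⟩
  have hrank : rankIn M (g x) = (V.filter (fun y => g y < g x)).card := by
    have : M.filter (· < g x) = (V.filter (fun y => g y < g x)).image g := by
      ext k
      simp only [Finset.mem_filter, hM, Finset.mem_image]
      constructor
      · rintro ⟨⟨y, hy, rfl⟩, hk⟩; exact ⟨y, ⟨hy, hk⟩, rfl⟩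
      · rintro ⟨y, ⟨hy, hk⟩, rfl⟩; exact ⟨⟨y, hy, rfl⟩, hk⟩
    rw [rankIn, this, Finset.card_image_of_injective _ g.injective]
  obtain ⟨hev1, hev2, hev3⟩ := hev
  by_cases hxS : x ∈ S
  · rw [(colOf_eq_zero_iff S T U x).2 hxS]
    refine (chi_eq_zero_iff M (g x)).2 ⟨(hmem x).2 (by simp [hV, hxS]), ?_⟩
    rw [hrank]
    have hsub : V.filter (fun y => g y < g x) ⊆ S.erase x := by
      intro y hy
      simp only [Finset.mem_filter, hV, Finset.mem_union] at hy
      obtain ⟨hyV, hylt⟩ := hy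
      have hyS : y ∈ S := by
        rcases hyV with (hyS | hyT) | hyU
        · exact hyS
        · exact absurd (hev1 x hxS y hyT) (by omega)
        · exact absurd (hev2 x hxS y hyU) (by omega)
      refine Finset.mem_erase.2 ⟨fun h => ?_, hyS⟩
      subst h; omega
    calc (V.filter (fun y => g y < g x)).card ≤ (S.erase x).card := Finset.card_le_card hsub
      _ < S.card := by
        rw [Finset.card_erase_of_mem hxS]
        have : 0 < S.card := Finset.card_pos.2 ⟨x, hxS⟩
        omega
  · by_cases hxT : x ∈ T
    · rw [(colOf_eq_one_iff hST x).2 hxT]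
      refine (chi_eq_one_iff M (g x)).2 ⟨(hmem x).2 (by simp [hV, hxT]), ?_, ?_⟩
      · rw [hrank]
        refine le_trans (le_of_eq rfl) (Finset.card_le_card ?_)
        intro y hy
        simp only [Finset.mem_filter, hV, Finset.mem_union]
        exact ⟨Or.inl (Or.inl hy), hev1 y hy x hxT⟩
      · rw [hrank]
        have hsub : V.filter (fun y => g y < g x) ⊆ S ∪ T.erase x := by
          intro y hy
          simp only [Finset.mem_filter, hV, Finset.mem_union] at hy
          obtain ⟨hyV, hylt⟩ := hy
          rcases hyV with (hyS | hyT) | hyU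
          · exact Finset.mem_union_left _ hyS
          · refine Finset.mem_union_right _ (Finset.mem_erase.2 ⟨fun h => ?_, hyT⟩)
            subst h; omega
          · exact absurd (hev3 x hxT y hyU) (by omega)
        calc (V.filter (fun y => g y < g x)).card ≤ (S ∪ T.erase x).card :=
              Finset.card_le_card hsub
          _ = S.card + (T.erase x).card :=
              Finset.card_union_of_disjoint (hST.mono_right (Finset.erase_subset _ _))
          _ < S.card + T.card := by
              rw [Finset.card_erase_of_mem hxT]
              have : 0 < T.card := Finset.card_pos.2 ⟨x, hxT⟩
              omega
    · by_cases hxU : x ∈ U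
      · rw [(colOf_eq_two_iff hSU hTU x).2 hxU]
        refine (chi_eq_two_iff M (g x)).2 ⟨(hmem x).2 (by simp [hV, hxU]), ?_⟩
        rw [hrank]
        have hsub : S ∪ T ⊆ V.filter (fun y => g y < g x) := by
          intro y hy
          simp only [Finset.mem_filter, hV, Finset.mem_union]
          rcases Finset.mem_union.1 hy with hyS | hyT
          · exact ⟨Or.inl (Or.inl hyS), hev2 y hyS x hxU⟩
          · exact ⟨Or.inl (Or.inr hyT), hev3 y hyT x hxU⟩
        calc S.card + T.card = (S ∪ T).card := (Finset.card_union_of_disjoint hST).symm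
          _ ≤ _ := Finset.card_le_card hsub
      · rw [(colOf_eq_three_iff S T U x).2 ⟨hxS, hxT, hxU⟩]
        refine (chi_eq_three_iff M (g x)).2 ?_
        rw [hmem x]
        simp [hV, hxS, hxT, hxU]

end Event

theorem card_orderEvent {β : Type*} [Fintype β] [DecidableEq β] (S T U : Finset β)
    (hST : Disjoint S T) (hSU : Disjoint S U) (hTU : Disjoint T U) :
    (univ.filter (fun g : β ≃ Fin (Fintype.card β) => OrderEvent S T U g)).card
      = (Fintype.card β).choose (S.card + T.card + U.card) *
        (S.card ! * T.card ! * U.card ! *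
          (Fintype.card β - (S.card + T.card + U.card))!) := by
  classical
  set n := Fintype.card β
  set m := S.card + T.card + U.card with hm
  have himg_card : ∀ g : β ≃ Fin n, ((S ∪ T ∪ U).image g).card = m := by
    intro g
    rw [Finset.card_image_of_injective _ g.injective, card_union3 S T U hST hSU hTU]
  have hdecomp : univ.filter (fun g : β ≃ Fin n => OrderEvent S T U g)
      = (Finset.powersetCard m (univ : Finset (Fin n))).biUnion
          (fun M => univ.filter
            (fun g : β ≃ Fin n => ∀ x, chi S.card T.card M (g x) = colOf S T U x)) := by
    ext g
    simp only [mem_filter, mem_univ, true_and, Finset.mem_biUnion]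
    constructor
    · intro hev
      exact ⟨(S ∪ T ∪ U).image g,
        Finset.mem_powersetCard_univ.2 (himg_card g), eventM' hST hSU hTU hev⟩
    · rintro ⟨M, _, hcol⟩
      exact (eventM hST hSU hTU hcol).2
  rw [hdecomp, Finset.card_biUnion]
  · have hconst : ∀ M ∈ Finset.powersetCard m (univ : Finset (Fin n)),
        (univ.filter (fun g : β ≃ Fin n =>
          ∀ x, chi S.card T.card M (g x) = colOf S T U x)).card
        = S.card ! * T.card ! * U.card ! * (n - m)! := by
      intro M hM
      have hMc : M.card = m := Finset.mem_powersetCard_univ.1 hM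
      rw [← Fintype.card_subtype]
      exact card_fixed_color S T U hST hSU hTU M hMc
    rw [Finset.sum_congr rfl hconst, Finset.sum_const,
      Finset.card_powersetCard, Finset.card_univ, smul_eq_mul, Fintype.card_fin]
  · intro M hM M' hM' hne
    simp only [Finset.disjoint_left, mem_filter, mem_univ, true_and]
    intro g hcol hcol'
    exact hne (((eventM hST hSU hTU hcol).1).trans ((eventM hST hSU hTU hcol').1).symm)

lemma arith_identity (n s t u : ℕ) (h : s + t + u ≤ n) :
    n.choose (s + t + u) * (s ! * t ! * u ! * (n - (s + t + u))!) *
      ((s + t + u).choose s * (t + u).choose t) = n ! := by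
  have h1 : (t + u).choose t * t ! * u ! = (t + u)! := by
    have := Nat.choose_mul_factorial_mul_factorial (show t ≤ t + u by omega)
    simpa [show t + u - t = u by omega] using this
  have h2 : (s + t + u).choose s * s ! * (t + u)! = (s + t + u)! := by
    have := Nat.choose_mul_factorial_mul_factorial (show s ≤ s + t + u by omega)
    simpa [show s + t + u - s = t + u by omega] using this
  have h3 : n.choose (s + t + u) * (s + t + u)! * (n - (s + t + u))! = n ! :=
    Nat.choose_mul_factorial_mul_factorial h
  calc n.choose (s + t + u) * (s ! * t ! * u ! * (n - (s + t + u))!) *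
        ((s + t + u).choose s * (t + u).choose t)
      = (n.choose (s + t + u) * (n - (s + t + u))!) *
        (((s + t + u).choose s * s !) * ((t + u).choose t * t ! * u !)) := by ring
    _ = (n.choose (s + t + u) * (n - (s + t + u))!) *
        (((s + t + u).choose s * s !) * (t + u)!) := by rw [h1]
    _ = (n.choose (s + t + u) * (n - (s + t + u))!) * (s + t + u)! := by
        rw [mul_assoc ((s + t + u).choose s) _ _] at h2 ⊢
        rw [h2]
    _ = n ! := by rw [← h3]; ring

section Transfer

variable {α : Type*} [DecidableEq α] (X : Finset α)

lemma subtype_inter (F G : Finset α) :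
    (F ∩ G).subtype (· ∈ X) = F.subtype (· ∈ X) ∩ G.subtype (· ∈ X) := by
  ext x; simp [Finset.mem_subtype]

lemma subtype_sdiff (F G : Finset α) :
    (F \ G).subtype (· ∈ X) = F.subtype (· ∈ X) \ G.subtype (· ∈ X) := by
  ext x; simp [Finset.mem_subtype]

lemma subtype_card_eq {F : Finset α} (h : F ⊆ X) :
    (F.subtype (· ∈ X)).card = F.card := by
  rw [Finset.card_subtype, Finset.filter_true_of_mem (fun x hx => h hx)]

lemma subtype_inj {F G : Finset α} (hF : F ⊆ X) (hG : G ⊆ X)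
    (h : F.subtype (· ∈ X) = G.subtype (· ∈ X)) : F = G := by
  ext x
  constructor
  · intro hx
    have hxX : x ∈ X := hF hx
    have : (⟨x, hxX⟩ : {y // y ∈ X}) ∈ F.subtype (· ∈ X) := by
      simp [Finset.mem_subtype, hx]
    rw [h] at this
    simpa [Finset.mem_subtype] using this
  · intro hx
    have hxX : x ∈ X := hG hx
    have : (⟨x, hxX⟩ : {y // y ∈ X}) ∈ G.subtype (· ∈ X) := by
      simp [Finset.mem_subtype, hx]
    rw [← h] at this
    simpa [Finset.mem_subtype] using this

end Transfer

section Key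

variable {β : Type*} [Fintype β] [DecidableEq β]

/-- The heart: if both order events hold and the max of `A1 ∪ A2` lies in `A2`,
then all the intersections coincide. -/
lemma key_disjoint (t : ℕ) (ht : 1 ≤ t) (A1 B1 A2 B2 : Finset β)
    (ha1 : (A1 ∩ B1).card ≤ t) (ha2 : (A2 ∩ B2).card ≤ t)
    (hb12 : t ≤ (A1 ∩ B2).card) (hb21 : t ≤ (A2 ∩ B1).card)
    (g : β ≃ Fin (Fintype.card β))
    (he1 : OrderEvent (A1 \ B1) (A1 ∩ B1) (B1 \ A1) g)
    (he2 : OrderEvent (A2 \ B2) (A2 ∩ B2) (B2 \ A2) g)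
    (hmax : ∃ xm ∈ A2, ∀ x ∈ A1 ∪ A2, g x ≤ g xm) :
    A1 ∩ B2 = A1 ∩ B1 ∧ A1 ∩ B1 = A2 ∩ B1 ∧ A1 ∩ B1 = A2 ∩ B2 := by
  obtain ⟨xm, hxmA2, hxmax⟩ := hmax
  -- derived order facts
  have fact1 : ∀ (A B : Finset β), OrderEvent (A \ B) (A ∩ B) (B \ A) g →
      ∀ x ∈ A, ∀ y ∈ B \ A, g x < g y := by
    rintro A B ⟨e1, e2, e3⟩ x hx y hy
    by_cases hxB : x ∈ B
    · exact e3 x (Finset.mem_inter.2 ⟨hx, hxB⟩) y hy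
    · exact e2 x (Finset.mem_sdiff.2 ⟨hx, hxB⟩) y hy
  have fact2 : ∀ (A B : Finset β), OrderEvent (A \ B) (A ∩ B) (B \ A) g →
      ∀ x ∈ A \ B, ∀ y ∈ B, g x < g y := by
    rintro A B ⟨e1, e2, e3⟩ x hx y hy
    by_cases hyA : y ∈ A
    · exact e1 x hx y (Finset.mem_inter.2 ⟨hyA, hy⟩)
    · exact e2 x hx y (Finset.mem_sdiff.2 ⟨hy, hyA⟩)
  -- Step 1 : A1 ∩ B2 ⊆ A2
  have step1 : A1 ∩ B2 ⊆ A2 := by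
    intro y hy
    rw [Finset.mem_inter] at hy
    by_contra hyA2
    have h1 : g xm < g y := fact1 A2 B2 he2 xm hxmA2 y (Finset.mem_sdiff.2 ⟨hy.2, hyA2⟩)
    have h2 : g y ≤ g xm := hxmax y (Finset.mem_union_left _ hy.1)
    omega
  have sub12 : A1 ∩ B2 ⊆ A2 ∩ B2 := fun y hy =>
    Finset.mem_inter.2 ⟨step1 hy, (Finset.mem_inter.1 hy).2⟩
  have eq12 : A1 ∩ B2 = A2 ∩ B2 :=
    Finset.eq_of_subset_of_card_le sub12 (le_trans ha2 hb12)
  have hC2card : (A2 ∩ B2).card = t :=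
    le_antisymm ha2 (le_trans hb12 (Finset.card_le_card sub12))
  have hC2sub : A2 ∩ B2 ⊆ A1 := by
    rw [← eq12]; exact Finset.inter_subset_left
  have hC2ne : (A2 ∩ B2).Nonempty := Finset.card_pos.1 (by omega)
  -- Step 2 : A2 ∩ B1 ⊆ A1
  have step2 : A2 ∩ B1 ⊆ A1 := by
    intro y hy
    rw [Finset.mem_inter] at hy
    by_contra hyA1
    have hyB1A1 : y ∈ B1 \ A1 := Finset.mem_sdiff.2 ⟨hy.2, hyA1⟩
    by_cases hyB2 : y ∈ B2
    · exact hyA1 (hC2sub (Finset.mem_inter.2 ⟨hy.1, hyB2⟩))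
    · obtain ⟨z, hz⟩ := hC2ne
      have hz2 : g y < g z :=
        fact2 A2 B2 he2 y (Finset.mem_sdiff.2 ⟨hy.1, hyB2⟩) z (Finset.mem_inter.1 hz).2
      have hz1 : g z < g y := fact1 A1 B1 he1 z (hC2sub hz) y hyB1A1
      omega
  have sub21 : A2 ∩ B1 ⊆ A1 ∩ B1 := fun y hy =>
    Finset.mem_inter.2 ⟨step2 hy, (Finset.mem_inter.1 hy).2⟩
  have eq21 : A2 ∩ B1 = A1 ∩ B1 :=
    Finset.eq_of_subset_of_card_le sub21 (le_trans ha1 hb21)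
  have hC1card : (A1 ∩ B1).card = t :=
    le_antisymm ha1 (le_trans hb21 (Finset.card_le_card sub21))
  -- Step 3 : A1 ∩ B1 = A2 ∩ B2
  have step3 : A1 ∩ B1 = A2 ∩ B2 := by
    by_cases hsub : A2 ∩ B2 ⊆ B1
    · refine (Finset.eq_of_subset_of_card_le (fun y hy => ?_) (by omega)).symm
      exact Finset.mem_inter.2 ⟨hC2sub hy, hsub hy⟩
    · rw [Finset.not_subset] at hsub
      obtain ⟨x, hxC2, hxB1⟩ := hsub
      have hxA1B1 : x ∈ A1 \ B1 := Finset.mem_sdiff.2 ⟨hC2sub hxC2, hxB1⟩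
      refine Finset.eq_of_subset_of_card_le (fun c hc => ?_) (by omega)
      have hcA2 : c ∈ A2 := by
        rw [← eq21] at hc
        exact (Finset.mem_inter.1 hc).1
      by_cases hcB2 : c ∈ B2
      · exact Finset.mem_inter.2 ⟨hcA2, hcB2⟩
      · exfalso
        have h1 : g c < g x :=
          fact2 A2 B2 he2 c (Finset.mem_sdiff.2 ⟨hcA2, hcB2⟩) x (Finset.mem_inter.1 hxC2).2
        have h2 : g x < g c := fact2 A1 B1 he1 x hxA1B1 c (Finset.mem_inter.1 hc).2
        omega
  exact ⟨eq12.trans step3.symm, eq21.symm, step3⟩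

end Key

theorem stmt_8 {ι α : Type*} [DecidableEq α] (t : ℕ) (ht : 1 ≤ t) (I : Finset ι)
    (A B : ι → Finset α)
    (ha : ∀ i ∈ I, (A i ∩ B i).card ≤ t)
    (hb : ∀ i ∈ I, ∀ j ∈ I, i ≠ j → t ≤ (A i ∩ B j).card)
    (hc' : ∀ i ∈ I, ∀ j ∈ I, i ≠ j → A i ∩ B i = A j ∩ B j →
      ¬(A i ∩ B j = A i ∩ B i ∧ A i ∩ B i = A j ∩ B i)) :
    ∑ i ∈ I, ((((A i ∪ B i).card.choose ((A i \ B i).card) : ℕ) : ℝ))⁻¹ *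
      ((((B i).card.choose ((A i ∩ B i).card) : ℕ) : ℝ))⁻¹ ≤ 1 := by
  classical
  set X : Finset α := I.biUnion (fun i => A i ∪ B i) with hX
  have hsubX : ∀ i ∈ I, A i ∪ B i ⊆ X := fun i hi => by
    simpa using Finset.subset_biUnion_of_mem (fun i => A i ∪ B i) hi
  set β := {x // x ∈ X}
  set n := Fintype.card β with hn
  -- subtype versions
  set A' : ι → Finset β := fun i => (A i).subtype (· ∈ X) with hA'
  set B' : ι → Finset β := fun i => (B i).subtype (· ∈ X) with hB'
  have hAB' : ∀ i, A' i ∩ B' i = (A i ∩ B i).subtype (· ∈ X) :=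
    fun i => (subtype_inter X (A i) (B i)).symm
  have hsd : ∀ i, A' i \ B' i = (A i \ B i).subtype (· ∈ X) :=
    fun i => (subtype_sdiff X (A i) (B i)).symm
  have hsd' : ∀ i, B' i \ A' i = (B i \ A i).subtype (· ∈ X) :=
    fun i => (subtype_sdiff X (B i) (A i)).symm
  have hABij : ∀ i j, A' i ∩ B' j = (A i ∩ B j).subtype (· ∈ X) :=
    fun i j => (subtype_inter X (A i) (B j)).symm
  -- events
  set F : ι → Finset (β ≃ Fin n) := fun i =>
    Finset.univ.filter (fun g : β ≃ Fin n =>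
      OrderEvent (A' i \ B' i) (A' i ∩ B' i) (B' i \ A' i) g) with hF
  -- cards transfer, for i ∈ I
  have hcards : ∀ i ∈ I,
      (A' i \ B' i).card = (A i \ B i).card ∧
      (A' i ∩ B' i).card = (A i ∩ B i).card ∧
      (B' i \ A' i).card = (B i \ A i).card := by
    intro i hi
    have h1 : A i \ B i ⊆ X := fun x hx =>
      hsubX i hi (Finset.mem_union_left _ (Finset.mem_sdiff.1 hx).1)
    have h2 : A i ∩ B i ⊆ X := fun x hx =>
      hsubX i hi (Finset.mem_union_left _ (Finset.mem_inter.1 hx).1)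
    have h3 : B i \ A i ⊆ X := fun x hx =>
      hsubX i hi (Finset.mem_union_right _ (Finset.mem_sdiff.1 hx).1)
    exact ⟨by rw [hsd i, subtype_card_eq X h1],
      by rw [hAB' i, subtype_card_eq X h2],
      by rw [hsd' i, subtype_card_eq X h3]⟩
  -- disjointness of blocks
  have hdisjST : ∀ i : ι, Disjoint (A' i \ B' i) (A' i ∩ B' i) := by
    intro i
    rw [Finset.disjoint_left]
    intro x hx hx'
    exact (Finset.mem_sdiff.1 hx).2 (Finset.mem_inter.1 hx').2
  have hdisjSU : ∀ i : ι, Disjoint (A' i \ B' i) (B' i \ A' i) := by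
    intro i
    rw [Finset.disjoint_left]
    intro x hx hx'
    exact (Finset.mem_sdiff.1 hx').2 (Finset.mem_sdiff.1 hx).1
  have hdisjTU : ∀ i : ι, Disjoint (A' i ∩ B' i) (B' i \ A' i) := by
    intro i
    rw [Finset.disjoint_left]
    intro x hx hx'
    exact (Finset.mem_sdiff.1 hx').2 (Finset.mem_inter.1 hx).1
  -- per-index counting identity
  have hcount : ∀ i ∈ I, (F i).card *
      ((A i ∪ B i).card.choose ((A i \ B i).card) *
        (B i).card.choose ((A i ∩ B i).card)) = n ! := by
    intro i hi
    obtain ⟨hc1, hc2, hc3⟩ := hcards i hi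
    set s := (A i \ B i).card
    set tc := (A i ∩ B i).card
    set u := (B i \ A i).card
    have hm : (A i ∪ B i).card = s + tc + u := by
      have : A i ∪ B i = (A i \ B i) ∪ (A i ∩ B i) ∪ (B i \ A i) := by
        ext x
        simp only [Finset.mem_union, Finset.mem_sdiff, Finset.mem_inter]
        tauto
      rw [this]
      apply card_union3
      · rw [Finset.disjoint_left]; intro x hx hx'
        exact (Finset.mem_sdiff.1 hx).2 (Finset.mem_inter.1 hx').2
      · rw [Finset.disjoint_left]; intro x hx hx'
        exact (Finset.mem_sdiff.1 hx').2 (Finset.mem_sdiff.1 hx).1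
      · rw [Finset.disjoint_left]; intro x hx hx'
        exact (Finset.mem_sdiff.1 hx').2 (Finset.mem_inter.1 hx).1
    have hbcard : (B i).card = tc + u := by
      have : B i = (A i ∩ B i) ∪ (B i \ A i) := by
        ext x
        simp only [Finset.mem_union, Finset.mem_sdiff, Finset.mem_inter]
        tauto
      rw [this]
      apply Finset.card_union_of_disjoint
      rw [Finset.disjoint_left]; intro x hx hx'
      exact (Finset.mem_sdiff.1 hx').2 (Finset.mem_inter.1 hx).1
    have hmn : s + tc + u ≤ n := by
      have h1 : A i ∪ B i ⊆ X := hsubX i hi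
      have := Finset.card_le_card h1
      rw [hm] at this
      have hXn : X.card = n := (Fintype.card_coe X).symm
      omega
    have hev := card_orderEvent (A' i \ B' i) (A' i ∩ B' i) (B' i \ A' i)
      (hdisjST i) (hdisjSU i) (hdisjTU i)
    rw [hc1, hc2, hc3] at hev
    rw [hF]
    simp only
    rw [hev, hm, hbcard]
    exact arith_identity n s tc u hmn
  -- disjointness of events
  have hdisjF : ∀ i ∈ I, ∀ j ∈ I, i ≠ j → Disjoint (F i) (F j) := by
    intro i hi j hj hij
    rw [Finset.disjoint_left]
    intro g hgi hgj
    have hei : OrderEvent (A' i \ B' i) (A' i ∩ B' i) (B' i \ A' i) g :=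
      (Finset.mem_filter.1 hgi).2
    have hej : OrderEvent (A' j \ B' j) (A' j ∩ B' j) (B' j \ A' j) g :=
      (Finset.mem_filter.1 hgj).2
    -- transfer hypotheses
    have hsubinter : ∀ k ∈ I, ∀ l ∈ I, A k ∩ B l ⊆ X := by
      intro k hk l hl x hx
      exact hsubX k hk (Finset.mem_union_left _ (Finset.mem_inter.1 hx).1)
    have hai' : (A' i ∩ B' i).card ≤ t := by
      rw [(hcards i hi).2.1]; exact ha i hi
    have haj' : (A' j ∩ B' j).card ≤ t := by
      rw [(hcards j hj).2.1]; exact ha j hj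
    have hbij' : t ≤ (A' i ∩ B' j).card := by
      rw [hABij i j, subtype_card_eq X (hsubinter i hi j hj)]
      exact hb i hi j hj hij
    have hbji' : t ≤ (A' j ∩ B' i).card := by
      rw [hABij j i, subtype_card_eq X (hsubinter j hj i hi)]
      exact hb j hj i hi hij.symm
    -- max element
    have hAine : (A' i).Nonempty := by
      have : (A' i ∩ B' j).Nonempty := Finset.card_pos.1 (by omega)
      obtain ⟨x, hx⟩ := this
      exact ⟨x, (Finset.mem_inter.1 hx).1⟩
    have hUne : (A' i ∪ A' j).Nonempty := hAine.mono Finset.subset_union_left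
    obtain ⟨xm, hxmU, hxmax⟩ := Finset.exists_max_image (A' i ∪ A' j) g hUne
    -- back-transfer of conclusions
    have transfer : ∀ F G : Finset α, F ⊆ X → G ⊆ X →
        F.subtype (· ∈ X) = G.subtype (· ∈ X) → F = G := fun F G hF hG h =>
      subtype_inj X hF hG h
    rcases Finset.mem_union.1 hxmU with hxmA | hxmA
    · -- max in A' i : apply key with roles (j, i)
      obtain ⟨e1, e2, e3⟩ := key_disjoint t ht (A' j) (B' j) (A' i) (B' i)
        haj' hai' hbji' hbij' g hej hei
        ⟨xm, hxmA, fun x hx => hxmax x (by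
          rcases Finset.mem_union.1 hx with h | h
          · exact Finset.mem_union_right _ h
          · exact Finset.mem_union_left _ h)⟩
      -- e1 : A'j ∩ B'i = A'j ∩ B'j, e2 : A'j ∩ B'j = A'i ∩ B'j, e3 : A'j ∩ B'j = A'i ∩ B'i
      have f1 : A j ∩ B i = A j ∩ B j := by
        apply transfer _ _ (hsubinter j hj i hi) (hsubinter j hj j hj)
        rw [← hABij j i, ← hABij j j]; exact_mod_cast e1
      have f2 : A j ∩ B j = A i ∩ B j := by
        apply transfer _ _ (hsubinter j hj j hj) (hsubinter i hi j hj)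
        rw [← hABij j j, ← hABij i j]; exact_mod_cast e2
      have f3 : A j ∩ B j = A i ∩ B i := by
        apply transfer _ _ (hsubinter j hj j hj) (hsubinter i hi i hi)
        rw [← hABij j j, ← hABij i i]; exact_mod_cast e3
      exact hc' i hi j hj hij f3.symm
        ⟨f2.symm.trans f3, f3.symm.trans f1.symm⟩
    · -- max in A' j : apply key with roles (i, j)
      obtain ⟨e1, e2, e3⟩ := key_disjoint t ht (A' i) (B' i) (A' j) (B' j)
        hai' haj' hbij' hbji' g hei hej ⟨xm, hxmA, hxmax⟩
      -- e1 : A'i ∩ B'j = A'i ∩ B'i, e2 : A'i ∩ B'i = A'j ∩ B'i, e3 : A'i ∩ B'i = A'j ∩ B'j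
      have f1 : A i ∩ B j = A i ∩ B i := by
        apply transfer _ _ (hsubinter i hi j hj) (hsubinter i hi i hi)
        rw [← hABij i j, ← hABij i i]; exact_mod_cast e1
      have f2 : A i ∩ B i = A j ∩ B i := by
        apply transfer _ _ (hsubinter i hi i hi) (hsubinter j hj i hi)
        rw [← hABij i i, ← hABij j i]; exact_mod_cast e2
      have f3 : A i ∩ B i = A j ∩ B j := by
        apply transfer _ _ (hsubinter i hi i hi) (hsubinter j hj j hj)
        rw [← hABij i i, ← hABij j j]; exact_mod_cast e3
      exact hc' i hi j hj hij f3 ⟨f1, f2⟩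
  -- sum of event cards bounded by n!
  have hsum : ∑ i ∈ I, (F i).card ≤ n ! := by
    rw [← Finset.card_biUnion hdisjF]
    calc (I.biUnion F).card ≤ (Finset.univ : Finset (β ≃ Fin n)).card :=
          Finset.card_le_card (Finset.subset_univ _)
      _ = n ! := by
          rw [Finset.card_univ, Fintype.card_equiv (Fintype.equivFin β), hn]
  -- real-number conclusion
  have hnfac_pos : (0 : ℝ) < (n ! : ℝ) := by positivity
  have hterm : ∀ i ∈ I,
      ((((A i ∪ B i).card.choose ((A i \ B i).card) : ℕ) : ℝ))⁻¹ *
        ((((B i).card.choose ((A i ∩ B i).card) : ℕ) : ℝ))⁻¹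
      = ((F i).card : ℝ) / (n ! : ℝ) := by
    intro i hi
    have hC1 : 0 < (A i ∪ B i).card.choose ((A i \ B i).card) :=
      Nat.choose_pos (Finset.card_le_card (fun x hx => Finset.mem_union_left _
        (Finset.mem_sdiff.1 hx).1))
    have hC2 : 0 < (B i).card.choose ((A i ∩ B i).card) :=
      Nat.choose_pos (Finset.card_le_card (fun x hx => (Finset.mem_inter.1 hx).2))
    have hcnt := hcount i hi
    have hcntR : ((F i).card : ℝ) *
        (((A i ∪ B i).card.choose ((A i \ B i).card) : ℝ) *
          ((B i).card.choose ((A i ∩ B i).card) : ℝ)) = (n ! : ℝ) := by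
      exact_mod_cast hcnt
    have h1 : ((A i ∪ B i).card.choose ((A i \ B i).card) : ℝ) ≠ 0 := by
      exact_mod_cast hC1.ne'
    have h2 : ((B i).card.choose ((A i ∩ B i).card) : ℝ) ≠ 0 := by
      exact_mod_cast hC2.ne'
    field_simp
    linarith [hcntR]
  calc ∑ i ∈ I, ((((A i ∪ B i).card.choose ((A i \ B i).card) : ℕ) : ℝ))⁻¹ *
        ((((B i).card.choose ((A i ∩ B i).card) : ℕ) : ℝ))⁻¹
      = ∑ i ∈ I, ((F i).card : ℝ) / (n ! : ℝ) := Finset.sum_congr rfl hterm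
    _ = (∑ i ∈ I, ((F i).card : ℝ)) / (n ! : ℝ) := by rw [Finset.sum_div]
    _ ≤ (n ! : ℝ) / (n ! : ℝ) := by
        gcongr
        exact_mod_cast hsum
    _ = 1 := div_self hnfac_pos.ne'
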